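/- Let 0 < q < 1 and let x : [0,∞) → ℝⁿ be a continuously differentiable solution of the Caputo IVP D_*^q x = f(x), x(0) = x_0, with equilibrium x* (f(x*) = 0). If x is not identically equal to x*, then there is no finite time T > 0 such that x(t) = x* for all t ≥ T; i.e., the equilibrium cannot be finite-time stable. -/

import Mathlib

open MeasureTheory Real Filter

/-- Caputo fractional derivative of order `q` with starting point `0`. -/
noncomputable def caputo (q : ℝ) (f : ℝ → ℝ) (t : ℝ) : ℝ :=
  (1 / Real.Gamma (1 - q)) * ∫ τ in (0:ℝ)..t, (t - τ) ^ (-q) * deriv f τ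

/-- Two-parameter Mittag-Leffler function (real arguments). -/
noncomputable def ML (a b z : ℝ) : ℝ :=
  ∑' k : ℕ, z ^ k / Real.Gamma (a * k + b)



private lemma caputo_step {T p : ℝ} (hT : 0 < T) (hp : 0 < p) {φ : ℝ → ℝ}
    (hφ : Continuous φ)
    (h : ∀ t, T < t → ∫ τ in (0:ℝ)..T, (t - τ) ^ (-p) * φ τ = 0) :
    ∀ t, T < t → ∫ τ in (0:ℝ)..T, (t - τ) ^ (-(p + 1)) * φ τ = 0 := by
  intro t ht
  obtain ⟨M, hM⟩ := (isCompact_Icc : IsCompact (Set.Icc (0:ℝ) T)).exists_bound_of_continuousOn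
    hφ.continuousOn
  have hMnn : 0 ≤ M := le_trans (norm_nonneg _) (hM 0 ⟨le_refl 0, hT.le⟩)
  set ε : ℝ := (t - T) / 2 with hε_def
  have hε : 0 < ε := by simp only [hε_def]; linarith
  have key : ∀ s ∈ Metric.ball t ε, ∀ τ ∈ Set.uIoc (0:ℝ) T, ε < s - τ := by
    intro s hs τ hτ
    rw [Set.uIoc_of_le hT.le] at hτ
    have h1 : |s - t| < ε := by simpa [Real.dist_eq] using hs
    have h2 := (abs_lt.1 h1).1
    have h3 : τ ≤ T := hτ.2
    simp only [hε_def] at *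
    linarith
  have hIcc : ∀ τ ∈ Set.uIoc (0:ℝ) T, τ ∈ Set.Icc (0:ℝ) T := by
    intro τ hτ
    rw [Set.uIoc_of_le hT.le] at hτ
    exact ⟨hτ.1.le, hτ.2⟩
  have main := intervalIntegral.hasDerivAt_integral_of_dominated_loc_of_deriv_le
      (F := fun s τ => (s - τ) ^ (-p) * φ τ)
      (F' := fun s τ => (-p * (s - τ) ^ (-p - 1)) * φ τ)
      (bound := fun _ => p * ε ^ (-p - 1) * M)
      (a := 0) (b := T) (μ := volume) (x₀ := t) (s := Metric.ball t ε) (Metric.ball_mem_nhds t hε)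
      ?_ ?_ ?_ ?_ ?_ ?_
  · -- use the conclusion
    have hzero : HasDerivAt (fun s => ∫ τ in (0:ℝ)..T, (s - τ) ^ (-p) * φ τ) 0 t := by
      have hev : (fun s => ∫ τ in (0:ℝ)..T, (s - τ) ^ (-p) * φ τ) =ᶠ[nhds t] fun _ => (0:ℝ) :=
        eventually_of_mem (Ioi_mem_nhds ht) fun s hs => h s hs
      exact (hasDerivAt_const t (0:ℝ)).congr_of_eventuallyEq hev
    have h0 : ∫ τ in (0:ℝ)..T, (-p * (t - τ) ^ (-p - 1)) * φ τ = 0 := main.2.unique hzero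
    have hre : (fun τ => (-p * (t - τ) ^ (-p - 1)) * φ τ)
        = fun τ => (-p) * ((t - τ) ^ (-p - 1) * φ τ) := funext fun τ => by ring
    rw [hre, intervalIntegral.integral_const_mul] at h0
    have hne : (-p : ℝ) ≠ 0 := by linarith
    have h1 := (mul_eq_zero.mp h0).resolve_left hne
    have : -(p + 1) = -p - 1 := by ring
    rw [this]
    exact h1
  · -- measurability of F x
    have hball : Metric.ball t ε ∈ nhds t := Metric.ball_mem_nhds t hε
    filter_upwards [hball] with s hs
    apply ContinuousOn.aestronglyMeasurable _ measurableSet_uIoc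
    apply ContinuousOn.mul _ hφ.continuousOn
    apply ContinuousOn.rpow_const (continuous_const.sub continuous_id).continuousOn
    intro τ hτ
    have := key s hs τ hτ
    exact Or.inl (by show s - τ ≠ 0; exact ne_of_gt (by linarith))
  · -- integrability of F t
    apply ContinuousOn.intervalIntegrable
    rw [Set.uIcc_of_le hT.le]
    have : ContinuousOn (fun τ : ℝ => (t - τ) ^ (-p)) (Set.Icc 0 T) := by
      apply ContinuousOn.rpow_const
      · exact (continuous_const.sub continuous_id).continuousOn
      · intro τ hτ
        exact Or.inl (by simp; linarith [hτ.2] : t - τ ≠ 0)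
    exact this.mul hφ.continuousOn
  · -- measurability of F' t
    apply ContinuousOn.aestronglyMeasurable _ measurableSet_uIoc
    apply ContinuousOn.mul _ hφ.continuousOn
    apply ContinuousOn.mul continuousOn_const
    apply ContinuousOn.rpow_const (continuous_const.sub continuous_id).continuousOn
    intro τ hτ
    have := key t (Metric.mem_ball_self hε) τ hτ
    exact Or.inl (by show t - τ ≠ 0; exact ne_of_gt (by linarith))
  · -- bound
    filter_upwards with τ hτ s hs
    have hlt := key s hs τ hτ
    have hpos : (0:ℝ) < s - τ := lt_trans hε hlt
    have hb1 : (s - τ) ^ (-p - 1) ≤ ε ^ (-p - 1) :=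
      Real.rpow_le_rpow_of_nonpos hε hlt.le (by linarith)
    have hb2 : |φ τ| ≤ M := hM τ (hIcc τ hτ)
    have h1 : ‖(-p * (s - τ) ^ (-p - 1)) * φ τ‖
        = p * (s - τ) ^ (-p - 1) * |φ τ| := by
      rw [norm_mul, norm_mul, norm_neg, Real.norm_eq_abs, Real.norm_eq_abs, Real.norm_eq_abs,
        abs_of_pos hp, abs_of_nonneg (Real.rpow_nonneg hpos.le _)]
    rw [h1]
    have hεnn : (0:ℝ) ≤ ε ^ (-p - 1) := Real.rpow_nonneg hε.le _
    have hrnn : (0:ℝ) ≤ (s - τ) ^ (-p - 1) := Real.rpow_nonneg hpos.le _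
    have hle := mul_le_mul hb1 hb2 (abs_nonneg _) hεnn
    calc p * (s - τ) ^ (-p - 1) * |φ τ| = p * ((s - τ) ^ (-p - 1) * |φ τ|) := by ring
      _ ≤ p * (ε ^ (-p - 1) * M) := mul_le_mul_of_nonneg_left hle hp.le
      _ = p * ε ^ (-p - 1) * M := by ring
  · exact intervalIntegrable_const
  · -- differentiability
    filter_upwards with τ hτ s hs
    have hpos : (0:ℝ) < s - τ := lt_trans hε (key s hs τ hτ)
    have d1 := ((hasDerivAt_id s).sub_const τ).rpow_const (p := -p) (Or.inl hpos.ne')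
    have d2 := d1.mul_const (φ τ)
    simp only [id_eq] at d2
    rw [one_mul] at d2
    exact d2


private lemma zero_of_moments {T : ℝ} (hT : 0 < T) {w ψ : ℝ → ℝ}
    (hw : ContinuousOn w (Set.Icc 0 T)) (hinj : Set.InjOn w (Set.Icc 0 T))
    (hψ : ContinuousOn ψ (Set.Icc 0 T))
    (hm : ∀ k : ℕ, ∫ τ in (0:ℝ)..T, w τ ^ k * ψ τ = 0) :
    ∀ τ ∈ Set.Ioo (0:ℝ) T, ψ τ = 0 := by
  set X := Set.Icc (0:ℝ) T
  let wc : C(X, ℝ) := ⟨X.restrict w, hw.restrict⟩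
  let ψc : C(X, ℝ) := ⟨X.restrict ψ, hψ.restrict⟩
  set A : Subalgebra ℝ C(X, ℝ) := Algebra.adjoin ℝ {wc} with hA
  have hsep : A.SeparatesPoints := by
    intro p q hpq
    refine ⟨wc, ⟨wc, Algebra.self_mem_adjoin_singleton ℝ wc, rfl⟩, ?_⟩
    intro hcon
    exact hpq (Subtype.ext (hinj p.2 q.2 hcon))
  have htop := ContinuousMap.subalgebra_topologicalClosure_eq_top_of_separatesPoints A hsep
  have hdense : Dense (A : Set C(X, ℝ)) := by
    rw [dense_iff_closure_eq, ← Subalgebra.topologicalClosure_coe, htop]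
    rfl
  -- bound on ψ
  obtain ⟨M, hM⟩ := (isCompact_Icc : IsCompact (Set.Icc (0:ℝ) T)).exists_bound_of_continuousOn hψ
  have hMnn : 0 ≤ M := le_trans (norm_nonneg _) (hM 0 ⟨le_refl 0, hT.le⟩)
  -- the functional
  set L : C(X, ℝ) → ℝ :=
    fun g => ∫ τ in (0:ℝ)..T, g (Set.projIcc 0 T hT.le τ) * ψ τ with hL
  have hint : ∀ g : C(X, ℝ),
      IntervalIntegrable (fun τ => g (Set.projIcc 0 T hT.le τ) * ψ τ) volume 0 T := by
    intro g
    apply ContinuousOn.intervalIntegrable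
    rw [Set.uIcc_of_le hT.le]
    exact ((g.continuous.comp (continuous_projIcc)).continuousOn).mul hψ
  have hLcont : Continuous L := by
    apply (LipschitzWith.of_dist_le_mul (K := Real.toNNReal (M * T)) ?_).continuous
    intro g₁ g₂
    rw [Real.dist_eq, hL]
    have hsub : (∫ τ in (0:ℝ)..T, g₁ (Set.projIcc 0 T hT.le τ) * ψ τ)
        - ∫ τ in (0:ℝ)..T, g₂ (Set.projIcc 0 T hT.le τ) * ψ τ
        = ∫ τ in (0:ℝ)..T,
            (g₁ (Set.projIcc 0 T hT.le τ) - g₂ (Set.projIcc 0 T hT.le τ)) * ψ τ := by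
      rw [← intervalIntegral.integral_sub (hint g₁) (hint g₂)]
      congr 1
      funext τ
      ring
    rw [hsub]
    have hb : ∀ τ ∈ Set.uIoc (0:ℝ) T,
        ‖(g₁ (Set.projIcc 0 T hT.le τ) - g₂ (Set.projIcc 0 T hT.le τ)) * ψ τ‖
          ≤ dist g₁ g₂ * M := by
      intro τ hτ
      rw [Set.uIoc_of_le hT.le] at hτ
      rw [norm_mul]
      apply mul_le_mul _ (hM τ ⟨hτ.1.le, hτ.2⟩) (norm_nonneg _) dist_nonneg
      have := ContinuousMap.dist_apply_le_dist (f := g₁) (g := g₂) (Set.projIcc 0 T hT.le τ)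
      rwa [Real.dist_eq] at this
    have hle := intervalIntegral.norm_integral_le_of_norm_le_const hb
    refine le_trans hle ?_
    rw [Real.coe_toNNReal']
    have h1 : |T - 0| = T := by rw [sub_zero, abs_of_pos hT]
    rw [h1]
    have h2 : dist g₁ g₂ * M * T ≤ M * T * dist g₁ g₂ := by ring_nf; exact le_rfl
    refine le_trans h2 ?_
    apply mul_le_mul_of_nonneg_right (le_max_left _ _) dist_nonneg
  have hL0 : ∀ g ∈ (A : Set C(X, ℝ)), L g = 0 := by
    intro g hg
    rw [hA, Algebra.adjoin_singleton_eq_range_aeval] at hg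
    rw [SetLike.mem_coe, AlgHom.mem_range] at hg
    obtain ⟨P, hP⟩ := hg
    have heqon : Set.EqOn (fun τ => g (Set.projIcc 0 T hT.le τ) * ψ τ)
        (fun τ => ∑ k ∈ Finset.range (P.natDegree + 1), P.coeff k * (w τ ^ k * ψ τ))
        (Set.uIcc 0 T) := by
      intro τ hτ
      rw [Set.uIcc_of_le hT.le] at hτ
      have h1 : g (Set.projIcc 0 T hT.le τ) = P.eval (w τ) := by
        rw [← hP, Polynomial.aeval_continuousMap_apply]
        congr 1
        show w ((Set.projIcc 0 T hT.le τ) : ℝ) = w τ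
        rw [Set.projIcc_of_mem hT.le hτ]
      simp only [h1]
      rw [Polynomial.eval_eq_sum_range, Finset.sum_mul]
      exact Finset.sum_congr rfl fun k _ => by ring
    rw [hL]
    simp only
    rw [intervalIntegral.integral_congr heqon]
    rw [intervalIntegral.integral_finset_sum]
    · refine Finset.sum_eq_zero fun k _ => ?_
      rw [intervalIntegral.integral_const_mul, hm k, mul_zero]
    · intro k _
      apply ContinuousOn.intervalIntegrable
      rw [Set.uIcc_of_le hT.le]
      exact continuousOn_const.mul (((hw.pow k)).mul hψ)
  have hLall : L = fun _ => (0:ℝ) :=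
    Continuous.ext_on hdense hLcont continuous_const hL0
  -- apply to ψc
  have h2 : ∫ τ in (0:ℝ)..T, ψ τ * ψ τ = 0 := by
    have := congrFun hLall ψc
    rw [hL] at this
    simp only at this
    have heq : (∫ τ in (0:ℝ)..T, ψc (Set.projIcc 0 T hT.le τ) * ψ τ)
        = ∫ τ in (0:ℝ)..T, ψ τ * ψ τ := by
      apply intervalIntegral.integral_congr
      intro τ hτ
      rw [Set.uIcc_of_le hT.le] at hτ
      simp only
      congr 1
      show ψ ((Set.projIcc 0 T hT.le τ) : ℝ) = ψ τ
      rw [Set.projIcc_of_mem hT.le hτ]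
    rw [heq] at this
    exact this
  rw [intervalIntegral.integral_of_le hT.le] at h2
  have hIntOn : IntegrableOn (fun τ => ψ τ * ψ τ) (Set.Ioc 0 T) volume := by
    have : IntervalIntegrable (fun τ => ψ τ * ψ τ) volume 0 T := by
      apply ContinuousOn.intervalIntegrable
      rw [Set.uIcc_of_le hT.le]
      exact hψ.mul hψ
    exact this.1
  have hae := (MeasureTheory.setIntegral_eq_zero_iff_of_nonneg_ae
    (Eventually.of_forall fun τ => mul_self_nonneg (ψ τ)) hIntOn).mp h2
  intro c hc
  by_contra hcne
  have hcont : ContinuousAt ψ c :=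
    hψ.continuousAt (Icc_mem_nhds hc.1 hc.2)
  have hev : ψ ⁻¹' {y : ℝ | y ≠ 0} ∈ nhds c := hcont (isOpen_ne.mem_nhds hcne)
  obtain ⟨ε, hε, hball⟩ := Metric.mem_nhds_iff.mp hev
  set a := max (c - ε / 2) 0 with ha_def
  set b := min (c + ε / 2) T with hb_def
  have hab : a < c ∧ c < b := by
    constructor
    · apply max_lt (by linarith) hc.1
    · apply lt_min (by linarith) hc.2
  have hsub1 : Set.Ioo a b ⊆ Set.Ioc 0 T := by
    intro τ hτ
    constructor
    · exact lt_of_le_of_lt (le_max_right _ _) hτ.1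
    · exact le_trans hτ.2.le (min_le_right _ _)
  have hsub2 : Set.Ioo a b ⊆ {τ : ℝ | ¬ (ψ τ * ψ τ = 0)} := by
    intro τ hτ
    have h1 : τ ∈ Metric.ball c ε := by
      rw [Metric.mem_ball, Real.dist_eq, abs_lt]
      have := hτ.1
      have := hτ.2
      have h3 : c - ε / 2 ≤ a := le_max_left _ _
      have h4 : b ≤ c + ε / 2 := min_le_left _ _
      constructor <;> [linarith; linarith]
    have := hball h1
    exact fun hcon => this (by
      rcases mul_self_eq_zero.mp hcon with h
      exact h)
  have hmeas0 : volume.restrict (Set.Ioc 0 T) {τ : ℝ | ¬ (ψ τ * ψ τ = 0)} = 0 := by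
    have := ae_iff.mp hae
    simpa using this
  have hpos : 0 < volume.restrict (Set.Ioc 0 T) (Set.Ioo a b) := by
    rw [Measure.restrict_apply measurableSet_Ioo,
      Set.inter_eq_self_of_subset_left hsub1, Real.volume_Ioo]
    simp only [ENNReal.ofReal_pos]
    linarith [hab.1, hab.2]
  have := measure_mono_null hsub2 hmeas0
  rw [this] at hpos
  exact lt_irrefl 0 hpos

private lemma phi_zero {T qq : ℝ} (hT : 0 < T) (hq : 0 < qq) {φ : ℝ → ℝ}
    (hφ : Continuous φ)
    (h : ∀ t, T < t → ∫ τ in (0:ℝ)..T, (t - τ) ^ (-qq) * φ τ = 0) :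
    ∀ τ ∈ Set.Ioo (0:ℝ) T, φ τ = 0 := by
  have hind : ∀ k : ℕ, ∀ t, T < t →
      ∫ τ in (0:ℝ)..T, (t - τ) ^ (-(qq + (k:ℝ))) * φ τ = 0 := by
    intro k
    induction k with
    | zero => simpa using h
    | succ k ih =>
      have hstep := caputo_step hT (by positivity) hφ ih
      intro t ht
      have h1 := hstep t ht
      have hexp : -((qq + (k:ℝ)) + 1) = -(qq + ((k+1 : ℕ):ℝ)) := by push_cast; ring
      rw [hexp] at h1
      exact h1
  have hposb : ∀ τ ∈ Set.Icc (0:ℝ) T, (0:ℝ) < T + 1 - τ := fun τ hτ => by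
    have := hτ.2; linarith
  have hbase : ContinuousOn (fun τ : ℝ => T + 1 - τ) (Set.Icc 0 T) := by fun_prop
  have hwcont : ContinuousOn (fun τ : ℝ => (T + 1 - τ)⁻¹) (Set.Icc 0 T) :=
    hbase.inv₀ fun τ hτ => (hposb τ hτ).ne'
  have hwinj : Set.InjOn (fun τ : ℝ => (T + 1 - τ)⁻¹) (Set.Icc 0 T) := by
    intro a _ b _ hab
    have h1 : T + 1 - a = T + 1 - b := inv_inj.mp hab
    linarith
  have hψcont : ContinuousOn (fun τ : ℝ => (T + 1 - τ) ^ (-qq) * φ τ) (Set.Icc 0 T) :=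
    (hbase.rpow_const fun τ hτ => Or.inl (hposb τ hτ).ne').mul hφ.continuousOn
  have hm : ∀ k : ℕ, ∫ τ in (0:ℝ)..T,
      ((T + 1 - τ)⁻¹) ^ k * ((T + 1 - τ) ^ (-qq) * φ τ) = 0 := by
    intro k
    have h2 := hind k (T + 1) (by linarith)
    have h4 : (∫ τ in (0:ℝ)..T, ((T + 1 - τ)⁻¹) ^ k * ((T + 1 - τ) ^ (-qq) * φ τ))
        = ∫ τ in (0:ℝ)..T, (T + 1 - τ) ^ (-(qq + (k:ℝ))) * φ τ := by
      apply intervalIntegral.integral_congr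
      intro τ hτ
      rw [Set.uIcc_of_le hT.le] at hτ
      have hpos := hposb τ hτ
      simp only
      rw [show -(qq + (k:ℝ)) = (-qq) + (-(k:ℝ)) by ring, Real.rpow_add hpos,
        Real.rpow_neg hpos.le ((k:ℕ):ℝ), Real.rpow_natCast, ← inv_pow]
      ring
    rw [h4]
    exact h2
  intro τ hτ
  have h3 := zero_of_moments hT hwcont hwinj hψcont hm τ hτ
  have hpos := hposb τ ⟨hτ.1.le, hτ.2.le⟩
  have hkpos : (0:ℝ) < (T + 1 - τ) ^ (-qq) := Real.rpow_pos_of_pos hpos _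
  rcases mul_eq_zero.mp h3 with h4 | h4
  · exact absurd h4 hkpos.ne'
  · exact h4

theorem caputo_no_finite_time_stability
    (n : ℕ) (q : ℝ) (hq0 : 0 < q) (hq1 : q < 1)
    (f : (Fin n → ℝ) → (Fin n → ℝ)) (hf : Continuous f)
    (xstar x0 : Fin n → ℝ) (heq : f xstar = 0)
    (x : ℝ → Fin n → ℝ) (hx : ContDiff ℝ 1 x)
    (hivp : ∀ t : ℝ, 0 ≤ t → ∀ i, caputo q (fun s => x s i) t = f (x t) i)
    (hinit : x 0 = x0)
    (hne : ∃ t : ℝ, 0 ≤ t ∧ x t ≠ xstar) :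
    ¬ ∃ T : ℝ, 0 < T ∧ ∀ t : ℝ, T ≤ t → x t = xstar := by
  rintro ⟨T, hT, hstab⟩
  obtain ⟨t₁, ht₁0, ht₁⟩ := hne
  apply ht₁
  have hxi : ∀ i, ContDiff ℝ 1 fun s => x s i := fun i => (contDiff_pi.mp hx) i
  have hφcont : ∀ i, Continuous (deriv (fun s => x s i)) := fun i =>
    (hxi i).continuous_deriv le_rfl
  -- derivative vanishes on [T, ∞)
  have hφIci : ∀ i, ∀ τ, T ≤ τ → deriv (fun s => x s i) τ = 0 := by
    intro i
    have hopen : ∀ τ, T < τ → deriv (fun s => x s i) τ = 0 := by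
      intro τ hτ
      have hev : (fun s => x s i) =ᶠ[nhds τ] fun _ => xstar i :=
        eventually_of_mem (Ioi_mem_nhds hτ) fun s hs => by
          show x s i = xstar i
          rw [hstab s (le_of_lt hs)]
      rw [hev.deriv_eq, deriv_const]
    have hclosed : IsClosed {τ : ℝ | deriv (fun s => x s i) τ = 0} :=
      isClosed_eq (hφcont i) continuous_const
    have hsub : Set.Ici T ⊆ {τ : ℝ | deriv (fun s => x s i) τ = 0} := by
      rw [← closure_Ioi]
      exact hclosed.closure_subset_iff.mpr fun τ hτ => hopen τ hτ
    exact fun τ hτ => hsub hτ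
  have hGamma : Real.Gamma (1 - q) ≠ 0 := (Real.Gamma_pos_of_pos (by linarith)).ne'
  -- the truncated integral vanishes
  have hprime : ∀ i, ∀ t, T < t →
      ∫ τ in (0:ℝ)..T, (t - τ) ^ (-q) * deriv (fun s => x s i) τ = 0 := by
    intro i t ht
    have h0t : (0:ℝ) ≤ t := by linarith
    have hc := hivp t h0t i
    rw [hstab t (le_of_lt ht), heq] at hc
    simp only [Pi.zero_apply, caputo] at hc
    have hint0t : ∫ τ in (0:ℝ)..t, (t - τ) ^ (-q) * deriv (fun s => x s i) τ = 0 := by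
      rcases mul_eq_zero.mp hc with h1 | h1
      · exact absurd h1 (div_ne_zero one_ne_zero hGamma)
      · exact h1
    have hint1 : IntervalIntegrable
        (fun τ => (t - τ) ^ (-q) * deriv (fun s => x s i) τ) volume 0 T := by
      apply ContinuousOn.intervalIntegrable
      rw [Set.uIcc_of_le hT.le]
      apply ContinuousOn.mul _ (hφcont i).continuousOn
      apply ContinuousOn.rpow_const (by fun_prop)
      intro τ hτ
      exact Or.inl (ne_of_gt (by have := hτ.2; linarith))
    have heqon : Set.EqOn (fun τ => (t - τ) ^ (-q) * deriv (fun s => x s i) τ)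
        (fun _ => (0:ℝ)) (Set.uIcc T t) := by
      intro τ hτ
      rw [Set.uIcc_of_le (le_of_lt ht)] at hτ
      simp only
      rw [hφIci i τ hτ.1, mul_zero]
    have hint2 : IntervalIntegrable
        (fun τ => (t - τ) ^ (-q) * deriv (fun s => x s i) τ) volume T t := by
      apply (intervalIntegrable_const (c := (0:ℝ))).congr
      intro τ hτ
      exact (heqon (Set.uIoc_subset_uIcc hτ)).symm
    have hzero2 : ∫ τ in T..t, (t - τ) ^ (-q) * deriv (fun s => x s i) τ = 0 := by
      rw [intervalIntegral.integral_congr heqon]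
      simp
    have hsplit := intervalIntegral.integral_add_adjacent_intervals hint1 hint2
    rw [hzero2, add_zero, hint0t] at hsplit
    exact hsplit
  -- derivative vanishes on [0, ∞)
  have hφzero : ∀ i, ∀ τ, (0:ℝ) ≤ τ → deriv (fun s => x s i) τ = 0 := by
    intro i
    have hIoo := phi_zero hT hq0 (hφcont i) (hprime i)
    have hclosed : IsClosed {τ : ℝ | deriv (fun s => x s i) τ = 0} :=
      isClosed_eq (hφcont i) continuous_const
    have hIcc : Set.Icc (0:ℝ) T ⊆ {τ : ℝ | deriv (fun s => x s i) τ = 0} := by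
      rw [← closure_Ioo (ne_of_lt hT)]
      exact hclosed.closure_subset_iff.mpr hIoo
    intro τ hτ
    by_cases hcase : τ ≤ T
    · exact hIcc ⟨hτ, hcase⟩
    · exact hφIci i τ (le_of_lt (not_le.mp hcase))
  -- conclude constancy
  by_cases hTt : T ≤ t₁
  · exact hstab t₁ hTt
  · push_neg at hTt
    funext i
    have hcont : ContinuousOn (fun s => x s i) (Set.Icc t₁ T) :=
      ((hxi i).continuous).continuousOn
    have hder : ∀ s ∈ Set.Ico t₁ T, HasDerivWithinAt (fun u => x u i) 0 (Set.Ici s) s := by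
      intro s hs
      have hdiff : HasDerivAt (fun u => x u i) (deriv (fun u => x u i) s) s :=
        (((hxi i).differentiable one_ne_zero) s).hasDerivAt
      rw [hφzero i s (le_trans ht₁0 hs.1)] at hdiff
      exact hdiff.hasDerivWithinAt
    have hconst := constant_of_has_deriv_right_zero hcont hder T ⟨hTt.le, le_rfl⟩
    have hxT : x T = xstar := hstab T le_rfl
    calc x t₁ i = x T i := hconst.symm
      _ = xstar i := by rw [hxT]
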